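/- The determinant of the N×N matrix Ḡ with entries Ḡ_{ij} = e^{-k|p_i − p_j|}, where p_1 < p_2 < ⋯ < p_N are real and k ∈ ℂ with Re(k) > 0, equals the product over i = 1,…,N−1 of (1 − e^{-2k(p_{i+1} − p_i)}). In particular Ḡ is invertible. -/

import Mathlib

open Complex Matrix

lemma aux_det (k : ℂ) : ∀ (N : ℕ) (p : Fin (N+1) → ℝ), StrictMono p →
    (Matrix.of fun i j : Fin (N+1) =>
        Complex.exp (-k * (|p i - p j| : ℝ))).det =
      (∏ i : Fin N, (1 - Complex.exp (-(2*k) * ((p i.succ - p i.castSucc : ℝ) : ℂ)))) := by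
  intro N
  induction N with
  | zero =>
    intro p hp
    simp [Matrix.det_fin_one]
  | succ N ih =>
    intro p hp
    set M : Matrix (Fin (N+2)) (Fin (N+2)) ℂ :=
      Matrix.of fun i j : Fin (N+2) => Complex.exp (-k * (|p i - p j| : ℝ)) with hM
    set lst : Fin (N+2) := Fin.last (N+1) with hlst
    set pre : Fin (N+2) := (Fin.last N).castSucc with hpre
    have hne : lst ≠ pre := by
      simp [hlst, hpre, Fin.ext_iff]
    set c : ℂ := Complex.exp (-k * ((p lst - p pre : ℝ) : ℂ)) with hc
    have hrow : ∀ j : Fin (N+2), j ≠ lst → M lst j = c * M pre j := by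
      intro j hj
      obtain ⟨j', rfl⟩ := Fin.exists_castSucc_eq.mpr hj
      have h1 : p j'.castSucc ≤ p pre := hp.monotone (by
        simp [hpre, Fin.le_def]; omega)
      have h2 : p pre ≤ p lst := hp.monotone (by simp [hpre, hlst, Fin.le_def])
      have e1 : |p lst - p j'.castSucc| = p lst - p j'.castSucc := by
        rw [_root_.abs_of_nonneg]; linarith
      have e2 : |p pre - p j'.castSucc| = p pre - p j'.castSucc := by
        rw [_root_.abs_of_nonneg]; linarith
      simp only [hM, Matrix.of_apply, hc, e1, e2, ← Complex.exp_add]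
      congr 1
      push_cast
      ring
    set M' : Matrix (Fin (N+2)) (Fin (N+2)) ℂ :=
      M.updateRow lst (M lst + (-c) • M pre) with hM'
    have hdet : M'.det = M.det := Matrix.det_updateRow_add_smul_self M hne (-c)
    have hM'last : ∀ j : Fin (N+2), j ≠ lst → M' lst j = 0 := by
      intro j hj
      simp only [hM', Matrix.updateRow_self, Pi.add_apply, Pi.smul_apply, smul_eq_mul]
      rw [hrow j hj]; ring
    have hdiag : M' lst lst = 1 - Complex.exp (-(2*k) * ((p lst - p pre : ℝ) : ℂ)) := by
      simp only [hM', Matrix.updateRow_self, Pi.add_apply, Pi.smul_apply, smul_eq_mul]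
      have e0 : |p lst - p lst| = (0:ℝ) := by simp
      have h2 : p pre ≤ p lst := hp.monotone (by simp [hpre, hlst, Fin.le_def])
      have e1 : |p pre - p lst| = p lst - p pre := by
        rw [abs_sub_comm, _root_.abs_of_nonneg]; linarith
      simp only [hM, Matrix.of_apply, e0, e1, hc]
      rw [Complex.ofReal_zero, mul_zero, Complex.exp_zero]
      have : -Complex.exp (-k * ((p lst - p pre : ℝ) : ℂ)) *
          Complex.exp (-k * ((p lst - p pre : ℝ) : ℂ)) =
          -Complex.exp (-(2*k) * ((p lst - p pre : ℝ) : ℂ)) := by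
        rw [neg_mul, ← Complex.exp_add]
        congr 2
        ring
      rw [this]
      ring
    -- expand along last row
    have hexp : M'.det = M' lst lst * (M'.submatrix lst.succAbove lst.succAbove).det := by
      rw [Matrix.det_succ_row M' lst]
      rw [Finset.sum_eq_single lst]
      · have : ((-1 : ℂ)) ^ (((lst:ℕ)) + ((lst:ℕ))) = 1 := Even.neg_one_pow ⟨(lst:ℕ), rfl⟩
        rw [this, one_mul]
      · intro j _ hj
        rw [hM'last j hj]; ring
      · intro h; exact absurd (Finset.mem_univ lst) h
    have hsub : (M'.submatrix lst.succAbove lst.succAbove) =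
        Matrix.of fun i j : Fin (N+1) =>
          Complex.exp (-k * (|(p ∘ Fin.castSucc) i - (p ∘ Fin.castSucc) j| : ℝ)) := by
      ext i j
      have hsa : lst.succAbove = Fin.castSucc := by
        simp [hlst, Fin.succAbove_last]
      simp only [Matrix.submatrix_apply, hsa]
      have hi : Fin.castSucc i ≠ lst := (Fin.castSucc_lt_last i).ne
      rw [hM', Matrix.updateRow_ne hi]
      rfl
    have ihp : StrictMono (p ∘ Fin.castSucc) := hp.comp Fin.strictMono_castSucc
    rw [hM] at hdet
    rw [← hdet, hexp, hsub, ih _ ihp, hdiag, Fin.prod_univ_castSucc, mul_comm]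
    simp [Function.comp, hlst, hpre, Fin.succ_last]

theorem stmt5 (N : ℕ) (p : Fin (N+1) → ℝ) (hp : StrictMono p) (k : ℂ) (hk : 0 < k.re) :
    (Matrix.of fun i j : Fin (N+1) =>
        Complex.exp (-k * (|p i - p j| : ℝ))).det =
      (∏ i : Fin N, (1 - Complex.exp (-(2*k) * ((p i.succ - p i.castSucc : ℝ) : ℂ)))) ∧
    IsUnit (Matrix.of fun i j : Fin (N+1) => Complex.exp (-k * (|p i - p j| : ℝ))) := by
  have hdet := aux_det k N p hp
  refine ⟨hdet, ?_⟩
  rw [Matrix.isUnit_iff_isUnit_det, hdet, isUnit_iff_ne_zero]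
  apply Finset.prod_ne_zero_iff.mpr
  intro i _
  intro h
  have hd : (0:ℝ) < p i.succ - p i.castSucc := by
    have := hp (Fin.castSucc_lt_succ (i := i))
    linarith
  have habs : ‖Complex.exp (-(2*k) * ((p i.succ - p i.castSucc : ℝ) : ℂ))‖ < 1 := by
    rw [Complex.norm_exp]
    have hre : ((-(2*k)) * ((p i.succ - p i.castSucc : ℝ) : ℂ)).re
        = -(2*k.re) * (p i.succ - p i.castSucc) := by
      simp [Complex.mul_re, Complex.ofReal_re, Complex.ofReal_im]
    rw [hre]
    apply Real.exp_lt_one_iff.mpr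
    nlinarith
  have : Complex.exp (-(2*k) * ((p i.succ - p i.castSucc : ℝ) : ℂ)) = 1 := by
    linear_combination -h
  rw [this] at habs
  simp at habs
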